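/- arXiv:1612.08946 — 3 statements merged into one kernel-verified Lean document; each statement's English description precedes it below -/
import Mathlib

section
/- Let n ≥ 0, let P be a nonzero polynomial of degree at most D in n+1 real variables, and let {O_i} be a family of pairwise disjoint open sets whose union is ℝ^{n+1} \ Z(P). If L ⊂ ℝ^{n+1} is a line not contained in Z(P), then L intersects at most D+1 of the sets O_i. -/
open Set

noncomputable section

/-- the line through `a` with direction `v` in `ℝ^{n+1}` -/
def lineThrough (n : ℕ) (a v : Fin (n+1) → ℝ) : Set (Fin (n+1) → ℝ) :=
  {z | ∃ s : ℝ, z = a + s • v}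

private lemma eval_line_aux (n : ℕ) (a v : Fin (n+1) → ℝ)
    (P : MvPolynomial (Fin (n+1)) ℝ) (s : ℝ) :
    Polynomial.eval s (MvPolynomial.aeval
        (fun j => Polynomial.C (a j) + Polynomial.C (v j) * Polynomial.X) P)
      = MvPolynomial.eval (a + s • v) P := by
  induction P using MvPolynomial.induction_on with
  | C c => simp
  | add p q hp hq => simp only [map_add, Polynomial.eval_add, hp, hq]
  | mul_X p j hp =>
      simp only [map_mul, Polynomial.eval_mul, hp, MvPolynomial.aeval_X,
        MvPolynomial.eval_mul, MvPolynomial.eval_X, Polynomial.eval_add,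
        Polynomial.eval_C, Polynomial.eval_mul, Polynomial.eval_X]
      simp [mul_comm]

/-- **A line meets at most `D+1` cells of a degree-`D` polynomial partition (Lemma 5.1).**
Let `P ≠ 0` have degree at most `D` and let `{O_i}` be pairwise disjoint open sets with
`⋃ O_i = ℝ^{n+1} ∖ Z(P)`.  If a line `L` is not contained in `Z(P)`, then `L` intersects at
most `D+1` of the sets `O_i`. -/
theorem stmt10 (n D : ℕ) (P : MvPolynomial (Fin (n+1)) ℝ) (hP : P ≠ 0)
    (hdeg : P.totalDegree ≤ D) {ι : Type*} (O : ι → Set (Fin (n+1) → ℝ))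
    (hopen : ∀ i, IsOpen (O i)) (hdisj : Pairwise (Function.onFun Disjoint O))
    (hunion : (⋃ i, O i) = {z | MvPolynomial.eval z P ≠ 0})
    (a v : Fin (n+1) → ℝ) (hv : v ≠ 0)
    (hL : ¬ lineThrough n a v ⊆ {z | MvPolynomial.eval z P = 0}) :
    {i : ι | (O i ∩ lineThrough n a v).Nonempty}.Finite ∧
      {i : ι | (O i ∩ lineThrough n a v).Nonempty}.ncard ≤ D + 1 := by
  classical
  set φ : ℝ → (Fin (n+1) → ℝ) := fun s => a + s • v with hφdef
  have hφcont : Continuous φ := by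
    apply Continuous.add continuous_const
    exact continuous_id.smul continuous_const
  set Q : Polynomial ℝ :=
    MvPolynomial.aeval (fun j => Polynomial.C (a j) + Polynomial.C (v j) * Polynomial.X) P
    with hQdef
  have hevalQ : ∀ s : ℝ, Q.eval s = MvPolynomial.eval (φ s) P := fun s =>
    eval_line_aux n a v P s
  obtain ⟨z, hzL, hzP⟩ : ∃ z ∈ lineThrough n a v, MvPolynomial.eval z P ≠ 0 := by
    rw [Set.not_subset] at hL
    obtain ⟨z, hz1, hz2⟩ := hL
    exact ⟨z, hz1, hz2⟩
  obtain ⟨s₀, rfl⟩ := hzL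
  have hQne : Q ≠ 0 := by
    intro h
    apply hzP
    rw [← hevalQ s₀, h] at hzP ⊢
    simp
  have hQdeg : Q.natDegree ≤ D := by
    have := MvPolynomial.aeval_natDegree_le P hdeg
      (fun j => Polynomial.C (a j) + Polynomial.C (v j) * Polynomial.X) (n := 1) ?_
    · simpa using this
    · intro i
      apply le_trans (Polynomial.natDegree_add_le _ _)
      simp only [Polynomial.natDegree_C, max_le_iff]
      exact ⟨Nat.zero_le 1, le_trans (Polynomial.natDegree_mul_le) (by simp)⟩
  set R : Finset ℝ := Q.roots.toFinset with hR
  have hRcard : R.card ≤ D := by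
    refine le_trans (Multiset.toFinset_card_le _) (le_trans ?_ hQdeg)
    exact_mod_cast Polynomial.card_roots' Q
  have hmemR : ∀ s : ℝ, Q.eval s = 0 → s ∈ R := by
    intro s hs
    rw [hR, Multiset.mem_toFinset, Polynomial.mem_roots hQne]
    exact hs
  set c : ℝ → ℕ := fun s => (R.filter (fun r => r < s)).card with hc
  have hcle : ∀ s, c s ≤ D := fun s => le_trans (Finset.card_filter_le _ _) hRcard
  have key : ∀ s t : ℝ, s ≤ t → Q.eval s ≠ 0 → Q.eval t ≠ 0 → c s = c t →
      ∀ u ∈ Icc s t, Q.eval u ≠ 0 := by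
    intro s t hst hs ht hct u hu hQu
    have huR : u ∈ R := hmemR u hQu
    have hus : u ≠ s := fun h => hs (h ▸ hQu)
    have hut : u ≠ t := fun h => ht (h ▸ hQu)
    have h1 : s < u := lt_of_le_of_ne hu.1 (Ne.symm hus)
    have h2 : u < t := lt_of_le_of_ne hu.2 hut
    have hsub : R.filter (fun r => r < s) ⊂ R.filter (fun r => r < t) := by
      refine Finset.ssubset_iff_of_subset ?_ |>.mpr ?_
      · intro x hx
        rw [Finset.mem_filter] at hx ⊢
        exact ⟨hx.1, lt_of_lt_of_le hx.2 hst⟩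
      · exact ⟨u, Finset.mem_filter.mpr ⟨huR, h2⟩, by simp [h1.not_gt]⟩
    have hlt := Finset.card_lt_card hsub
    simp only [hc] at hct
    omega
  have seg : ∀ s t : ℝ, s ≤ t → (∀ u ∈ Icc s t, Q.eval u ≠ 0) →
      ∀ i j : ι, φ s ∈ O i → φ t ∈ O j → i = j := by
    intro s t hst hne i j hi hj
    by_contra hij
    have hconn : IsPreconnected (φ '' Icc s t) :=
      (isPreconnected_Icc).image φ hφcont.continuousOn
    have hcover : φ '' Icc s t ⊆ O i ∪ (⋃ k ∈ {k | k ≠ i}, O k) := by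
      rintro x ⟨u, hu, rfl⟩
      have hx : φ u ∈ ⋃ k, O k := by
        rw [hunion]
        have := hne u hu
        rw [hevalQ u] at this
        exact this
      obtain ⟨k, hk⟩ := mem_iUnion.mp hx
      by_cases hki : k = i
      · exact Or.inl (hki ▸ hk)
      · exact Or.inr (mem_biUnion hki hk)
    have hdisj2 : Disjoint (O i) (⋃ k ∈ {k | k ≠ i}, O k) := by
      rw [disjoint_iUnion₂_right]
      intro k hk
      exact hdisj (Ne.symm hk)
    have hsubset : φ '' Icc s t ⊆ O i := by
      refine IsPreconnected.subset_left_of_subset_union (hopen i) ?_ hdisj2 hcover ?_ hconn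
      · exact isOpen_biUnion fun k _ => hopen k
      · exact ⟨φ s, ⟨⟨s, ⟨le_refl s, hst⟩, rfl⟩, hi⟩⟩
    have hjmem : φ t ∈ O i := hsubset ⟨t, ⟨hst, le_refl t⟩, rfl⟩
    exact absurd (hdisj hij) (Set.not_disjoint_iff.mpr ⟨φ t, hjmem, hj⟩)
  -- choose parameters
  set S := {i : ι | (O i ∩ lineThrough n a v).Nonempty} with hS
  have hex : ∀ i ∈ S, ∃ s : ℝ, φ s ∈ O i := by
    rintro i ⟨z, hzO, t, rfl⟩
    exact ⟨t, hzO⟩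
  set σf : ι → ℝ := fun i => if h : ∃ s : ℝ, φ s ∈ O i then h.choose else 0 with hσf
  have hσmem : ∀ i ∈ S, φ (σf i) ∈ O i := by
    intro i hi
    have h := hex i hi
    simp only [hσf, dif_pos h]
    exact h.choose_spec
  have hσne : ∀ i ∈ S, Q.eval (σf i) ≠ 0 := by
    intro i hi
    have : φ (σf i) ∈ ⋃ k, O k := mem_iUnion.mpr ⟨i, hσmem i hi⟩
    rw [hunion] at this
    rw [hevalQ]
    exact this
  have hinj : Set.InjOn (fun i => c (σf i)) S := by
    intro i hi j hj hcij
    rcases le_total (σf i) (σf j) with hle | hle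
    · exact seg (σf i) (σf j) hle
        (key _ _ hle (hσne i hi) (hσne j hj) hcij) i j (hσmem i hi) (hσmem j hj)
    · exact (seg (σf j) (σf i) hle
        (key _ _ hle (hσne j hj) (hσne i hi) hcij.symm) j i (hσmem j hj) (hσmem i hi)).symm
  have himg : (fun i => c (σf i)) '' S ⊆ ↑(Finset.Iic D) := by
    rintro x ⟨i, hi, rfl⟩
    simp only [Finset.coe_Iic, mem_Iic]
    exact hcle _
  have hfin : S.Finite :=
    Set.Finite.of_finite_image (((Finset.Iic D).finite_toSet).subset himg) hinj
  refine ⟨hfin, ?_⟩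
  calc S.ncard = ((fun i => c (σf i)) '' S).ncard := (Set.ncard_image_of_injOn hinj).symm
    _ ≤ (↑(Finset.Iic D) : Set ℕ).ncard :=
        Set.ncard_le_ncard himg (Finset.Iic D).finite_toSet
    _ = D + 1 := by rw [Set.ncard_coe_finset, Nat.card_Iic]

end
end

section
/- Let K ≥ 1, ε ∈ (0,1), r > 0, C₀ ≥ 1, and let T be a finite set of points in ℝ² such that every subset of T whose points have pairwise distances < r has at most C₀ elements. For each τ ∈ T let u_τ, g_τ, h_τ be complex numbers with u_τ = g_τ + h_τ, and set u = Σ_{τ∈T} u_τ. Assume max_{τ∈T} |u_τ| ≤ K^{-ε⁴} |u|, C₀ K^{-ε⁴} ≤ 1/10, and |T| K^{-10} ≤ 1/10. Then there exists a subset I ⊆ T such that |u| ≤ 10 ( |Σ_{τ∈I} h_τ| + K^{10} max_{τ₁,τ₂ ∈ T, |τ₁−τ₂| ≥ r} |g_{τ₁}|^{1/2} |g_{τ₂}|^{1/2} ). -/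
open scoped NNReal

noncomputable section

abbrev E2 : Type := EuclideanSpace ℝ (Fin 2)

set_option maxHeartbeats 1000000

/-- **Abstract pigeonholing content of the wall-decomposition lemma (Lemma 6.2).**
Let `T` be a finite set of points of `ℝ²` such that any subset with pairwise distances `< r`
has at most `C₀` elements, and let `u_τ = g_τ + h_τ` with `u = Σ_{τ∈T} u_τ`.  If
`max_τ |u_τ| ≤ K^{-ε⁴}|u|`, `C₀ K^{-ε⁴} ≤ 1/10` and `|T| K^{-10} ≤ 1/10`, then there is
`I ⊆ T` with `|u| ≤ 10 (|Σ_{τ∈I} h_τ| + K^{10} max_{τ₁,τ₂∈T, |τ₁-τ₂|≥r} |g_{τ₁}|^{1/2}|g_{τ₂}|^{1/2})`. -/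
theorem stmt11 (K ε r C₀ : ℝ) (hK : 1 ≤ K) (hε : 0 < ε) (hε1 : ε < 1) (hr : 0 < r)
    (hC₀ : 1 ≤ C₀) (T : Finset E2)
    (hsep : ∀ S ⊆ T, (∀ τ₁ ∈ S, ∀ τ₂ ∈ S, dist τ₁ τ₂ < r) → (S.card : ℝ) ≤ C₀)
    (u g h : E2 → ℂ) (hugh : ∀ τ ∈ T, u τ = g τ + h τ)
    (hmax : ∀ τ ∈ T, ‖u τ‖ ≤ K ^ (-(ε ^ 4)) * ‖∑ τ' ∈ T, u τ'‖)
    (hC : C₀ * K ^ (-(ε ^ 4)) ≤ 1/10)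
    (hT : (T.card : ℝ) * K ^ (-(10:ℝ)) ≤ 1/10) :
    ∃ I ⊆ T,
      ‖∑ τ' ∈ T, u τ'‖ ≤
        10 * (‖∑ τ' ∈ I, h τ'‖ +
          K ^ (10:ℝ) *
            (((T ×ˢ T).filter (fun q => r ≤ dist q.1 q.2)).sup
              (fun q => ‖g q.1‖₊ ^ ((1:ℝ)/2) * ‖g q.2‖₊ ^ ((1:ℝ)/2)) : ℝ≥0)) := by
  classical
  have hKpos : (0:ℝ) < K := lt_of_lt_of_le one_pos hK
  set U := ‖∑ τ' ∈ T, u τ'‖ with hUdef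
  have hUnn : 0 ≤ U := norm_nonneg _
  set Bil : ℝ≥0 := ((T ×ˢ T).filter (fun q => r ≤ dist q.1 q.2)).sup
      (fun q => ‖g q.1‖₊ ^ ((1:ℝ)/2) * ‖g q.2‖₊ ^ ((1:ℝ)/2)) with hBildef
  have hK10pos : (0:ℝ) < K ^ (10:ℝ) := Real.rpow_pos_of_pos hKpos _
  rcases eq_or_lt_of_le hUnn with hU0 | hUpos
  · exact ⟨∅, Finset.empty_subset _, by
      rw [← hU0]
      positivity⟩
  set c : ℝ := K ^ (-(10:ℝ)) * U with hcdef
  have hcpos : 0 < c := mul_pos (Real.rpow_pos_of_pos hKpos _) hUpos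
  set B : Finset E2 := T.filter (fun τ => c < ‖g τ‖) with hBdef
  by_cases hpair : ∃ τ₁ ∈ B, ∃ τ₂ ∈ B, r ≤ dist τ₁ τ₂
  · -- bilinear term dominates
    obtain ⟨τ₁, hτ₁, τ₂, hτ₂, hd⟩ := hpair
    have hτ₁T : τ₁ ∈ T := (Finset.mem_filter.mp hτ₁).1
    have hτ₂T : τ₂ ∈ T := (Finset.mem_filter.mp hτ₂).1
    have hg₁ : c < ‖g τ₁‖ := (Finset.mem_filter.mp hτ₁).2
    have hg₂ : c < ‖g τ₂‖ := (Finset.mem_filter.mp hτ₂).2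
    have hmem : (τ₁, τ₂) ∈ (T ×ˢ T).filter (fun q => r ≤ dist q.1 q.2) :=
      Finset.mem_filter.mpr ⟨Finset.mem_product.mpr ⟨hτ₁T, hτ₂T⟩, hd⟩
    have hle : (‖g τ₁‖₊ ^ ((1:ℝ)/2) * ‖g τ₂‖₊ ^ ((1:ℝ)/2) : ℝ≥0) ≤ Bil := by
      have h0 := Finset.le_sup
        (f := fun q : E2 × E2 => ‖g q.1‖₊ ^ ((1:ℝ)/2) * ‖g q.2‖₊ ^ ((1:ℝ)/2)) hmem
      rw [hBildef]
      simpa using h0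
    have hleR : ‖g τ₁‖ ^ ((1:ℝ)/2) * ‖g τ₂‖ ^ ((1:ℝ)/2) ≤ (Bil : ℝ) := by
      have := NNReal.coe_le_coe.mpr hle
      rwa [NNReal.coe_mul, NNReal.coe_rpow, NNReal.coe_rpow, coe_nnnorm, coe_nnnorm] at this
    have hcB : c ≤ (Bil : ℝ) := by
      refine le_trans ?_ hleR
      have h1 : c ^ ((1:ℝ)/2) * c ^ ((1:ℝ)/2) = c := by
        rw [← Real.rpow_add hcpos]
        norm_num
      calc c = c ^ ((1:ℝ)/2) * c ^ ((1:ℝ)/2) := h1.symm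
        _ ≤ ‖g τ₁‖ ^ ((1:ℝ)/2) * ‖g τ₂‖ ^ ((1:ℝ)/2) := by
            apply mul_le_mul
            · exact Real.rpow_le_rpow hcpos.le hg₁.le (by norm_num)
            · exact Real.rpow_le_rpow hcpos.le hg₂.le (by norm_num)
            · positivity
            · positivity
    have hUB : U ≤ K ^ (10:ℝ) * (Bil : ℝ) := by
      have : K ^ (10:ℝ) * c = U := by
        rw [hcdef, ← mul_assoc, ← Real.rpow_add hKpos]
        norm_num
      nlinarith [mul_le_mul_of_nonneg_left hcB hK10pos.le]
    refine ⟨∅, Finset.empty_subset _, ?_⟩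
    have hBilnn : (0:ℝ) ≤ (Bil : ℝ) := Bil.coe_nonneg
    simp only [Finset.sum_empty, norm_zero]
    nlinarith [mul_nonneg hK10pos.le hBilnn]
  · -- B is a clique of small diameter, so small; take I = T \ B
    push_neg at hpair
    have hBcard : (B.card : ℝ) ≤ C₀ :=
      hsep B (Finset.filter_subset _ _) hpair
    refine ⟨T \ B, Finset.sdiff_subset, ?_⟩
    have hsplit : ∑ τ' ∈ T \ B, u τ' + ∑ τ' ∈ B, u τ' = ∑ τ' ∈ T, u τ' :=
      Finset.sum_sdiff (Finset.filter_subset _ _)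
    -- bound ‖∑_B u‖
    have hBu : ‖∑ τ' ∈ B, u τ'‖ ≤ (B.card : ℝ) * (K ^ (-(ε ^ 4)) * U) := by
      calc ‖∑ τ' ∈ B, u τ'‖ ≤ ∑ τ' ∈ B, ‖u τ'‖ := norm_sum_le _ _
        _ ≤ B.card • (K ^ (-(ε ^ 4)) * U) := by
            apply Finset.sum_le_card_nsmul
            intro x hx
            exact hmax x (Finset.filter_subset _ _ hx)
        _ = (B.card : ℝ) * (K ^ (-(ε ^ 4)) * U) := by
            rw [nsmul_eq_mul]
    have hBu' : ‖∑ τ' ∈ B, u τ'‖ ≤ U / 10 := by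
      have h1 : (B.card : ℝ) * (K ^ (-(ε ^ 4)) * U) ≤ C₀ * (K ^ (-(ε ^ 4)) * U) := by
        apply mul_le_mul_of_nonneg_right hBcard
        positivity
      have h2 : C₀ * (K ^ (-(ε ^ 4)) * U) = (C₀ * K ^ (-(ε ^ 4))) * U := by ring
      nlinarith [mul_le_mul_of_nonneg_right hC hUnn]
    -- bound ‖∑_{T\B} g‖
    have hTBg : ‖∑ τ' ∈ T \ B, g τ'‖ ≤ U / 10 := by
      have hcard : ((T \ B).card : ℝ) ≤ (T.card : ℝ) := by
        exact_mod_cast Finset.card_le_card Finset.sdiff_subset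
      calc ‖∑ τ' ∈ T \ B, g τ'‖ ≤ ∑ τ' ∈ T \ B, ‖g τ'‖ := norm_sum_le _ _
        _ ≤ (T \ B).card • c := by
            apply Finset.sum_le_card_nsmul
            intro x hx
            have hxT : x ∈ T := (Finset.mem_sdiff.mp hx).1
            have hxB : x ∉ B := (Finset.mem_sdiff.mp hx).2
            by_contra hcon
            exact hxB (Finset.mem_filter.mpr ⟨hxT, by linarith [not_le.mp hcon]⟩)
        _ = ((T \ B).card : ℝ) * c := by rw [nsmul_eq_mul]
        _ ≤ (T.card : ℝ) * c := by
            apply mul_le_mul_of_nonneg_right hcard hcpos.le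
        _ ≤ U / 10 := by
            rw [hcdef, ← mul_assoc]
            nlinarith [mul_le_mul_of_nonneg_right hT hUnn]
    -- conclude
    have hkey : U ≤ ‖∑ τ' ∈ T \ B, h τ'‖ + U / 10 + U / 10 := by
      have hsum : ∑ τ' ∈ T \ B, u τ' = ∑ τ' ∈ T \ B, g τ' + ∑ τ' ∈ T \ B, h τ' := by
        rw [← Finset.sum_add_distrib]
        apply Finset.sum_congr rfl
        intro x hx
        exact hugh x ((Finset.mem_sdiff.mp hx).1)
      have : U ≤ ‖∑ τ' ∈ T \ B, g τ'‖ + ‖∑ τ' ∈ T \ B, h τ'‖ + ‖∑ τ' ∈ B, u τ'‖ := by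
        calc U = ‖∑ τ' ∈ T \ B, g τ' + ∑ τ' ∈ T \ B, h τ' + ∑ τ' ∈ B, u τ'‖ := by
              rw [hUdef, ← hsplit, hsum]
          _ ≤ ‖∑ τ' ∈ T \ B, g τ' + ∑ τ' ∈ T \ B, h τ'‖ + ‖∑ τ' ∈ B, u τ'‖ := norm_add_le _ _
          _ ≤ ‖∑ τ' ∈ T \ B, g τ'‖ + ‖∑ τ' ∈ T \ B, h τ'‖ + ‖∑ τ' ∈ B, u τ'‖ := by
              linarith [norm_add_le (∑ τ' ∈ T \ B, g τ') (∑ τ' ∈ T \ B, h τ')]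
      linarith
    have hBilnn : (0:ℝ) ≤ (Bil : ℝ) := Bil.coe_nonneg
    nlinarith [mul_nonneg hK10pos.le hBilnn]

end
end

section
/- (Tangency is preserved under parabolic rescaling.) Let R ≥ 1, E > 0 with E R^{-1/2} ≤ 1/2, and ξ₀, ζ ∈ ℝ² with |ξ₀| ≤ 1 and |ζ| ≤ 1; set ξ = ξ₀ + R^{-1/4} ζ. Let P be a polynomial on ℝ³ and define Q(x̃, t̃) := P(R^{1/4} x̃ − 2 R^{1/2} t̃ ξ₀, R^{1/2} t̃). Let z₀ = (x₀, t₀) ∈ ℝ³ with ∇P(z₀) ≠ 0 and let z̃₀ = (R^{-1/4} x₀ + 2 t₀ R^{-1/4} ξ₀, R^{-1/2} t₀) be its image. If |(-2ξ, 1) · ∇P(z₀)| / |∇P(z₀)| ≤ E R^{-1/2}, then ∇Q(z̃₀) ≠ 0 and |(-2ζ, 1) · ∇Q(z̃₀)| / |∇Q(z̃₀)| ≤ C E R^{-1/4} for an absolute constant C. -/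
open MvPolynomial

noncomputable section

/-- gradient of a polynomial on `ℝ³` -/
def grad3 (P : MvPolynomial (Fin 3) ℝ) (z : Fin 3 → ℝ) : Fin 3 → ℝ :=
  fun i => MvPolynomial.eval z (MvPolynomial.pderiv i P)

/-- Euclidean dot product on `ℝ³` -/
def dot3 (v w : Fin 3 → ℝ) : ℝ := ∑ i, v i * w i

/-- Euclidean length on `ℝ³` -/
def len3 (v : Fin 3 → ℝ) : ℝ := Real.sqrt (∑ i, v i ^ 2)

/-- the direction `(-2w, 1)` of a wave packet with frequency center `w` -/
def dirV (w : Fin 2 → ℝ) : Fin 3 → ℝ := ![(-2) * w 0, (-2) * w 1, 1]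

/-- `Q(x̃,t̃) = P(R^{1/4}x̃ − 2R^{1/2}t̃ξ₀, R^{1/2}t̃)`, the polynomial arising from `P` under
parabolic rescaling at frequency center `ξ₀` and scale `R^{-1/4}`. -/
def rescaledPoly (R : ℝ) (ξ₀ : Fin 2 → ℝ) (P : MvPolynomial (Fin 3) ℝ) :
    MvPolynomial (Fin 3) ℝ :=
  MvPolynomial.bind₁
    ![C (R ^ ((1:ℝ)/4)) * X 0 - C (2 * R ^ ((1:ℝ)/2) * ξ₀ 0) * X 2,
      C (R ^ ((1:ℝ)/4)) * X 1 - C (2 * R ^ ((1:ℝ)/2) * ξ₀ 1) * X 2,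
      C (R ^ ((1:ℝ)/2)) * X 2] P

lemma eval_pderiv_bind₁ (f : Fin 3 → MvPolynomial (Fin 3) ℝ) (P : MvPolynomial (Fin 3) ℝ)
    (i : Fin 3) (z : Fin 3 → ℝ) :
    eval z (pderiv i (bind₁ f P)) =
      ∑ j, eval (fun k => eval z (f k)) (pderiv j P) * eval z (pderiv i (f j)) := by
  induction P using MvPolynomial.induction_on with
  | C a => simp
  | add p q hp hq =>
      simp [hp, hq, add_mul, Finset.sum_add_distrib]
  | mul_X p j hp =>
      have hb : bind₁ f (p * X j) = bind₁ f p * f j := by simp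
      rw [hb, pderiv_mul, map_add, map_mul, map_mul, hp]
      have he : eval z (bind₁ f p) = eval (fun k => eval z (f k)) p := by
        simpa using aeval_bind₁ (S := ℝ) z f p
      rw [he]
      have hd : ∀ k : Fin 3, pderiv k (p * X j) = pderiv k p * X j + p * pderiv k (X j) := by
        intro k; rw [pderiv_mul]
      simp only [hd, map_add, map_mul, eval_X, add_mul, Finset.sum_add_distrib, Finset.sum_mul]
      congr 1
      · apply Finset.sum_congr rfl; intro k _; ring
      · fin_cases j <;>
          simp [Fin.sum_univ_three, pderiv_X, Pi.single_apply]

lemma grad_rescaled_key (R : ℝ) (hR : 1 ≤ R) (ξ₀ : Fin 2 → ℝ) (P : MvPolynomial (Fin 3) ℝ)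
    (z₀ : Fin 3 → ℝ) :
    grad3 (rescaledPoly R ξ₀ P) ![R ^ (-(1:ℝ)/4) * z₀ 0 + 2 * z₀ 2 * R ^ (-(1:ℝ)/4) * ξ₀ 0,
        R ^ (-(1:ℝ)/4) * z₀ 1 + 2 * z₀ 2 * R ^ (-(1:ℝ)/4) * ξ₀ 1,
        R ^ (-(1:ℝ)/2) * z₀ 2] =
      ![R ^ ((1:ℝ)/4) * grad3 P z₀ 0, R ^ ((1:ℝ)/4) * grad3 P z₀ 1,
        R ^ ((1:ℝ)/2) * (grad3 P z₀ 2 - 2 * ξ₀ 0 * grad3 P z₀ 0 - 2 * ξ₀ 1 * grad3 P z₀ 1)] := by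
  have hR0 : (0:ℝ) < R := lt_of_lt_of_le one_pos hR
  set s : ℝ := R ^ ((1:ℝ)/4) with hs
  have hs0 : s ≠ 0 := ne_of_gt (Real.rpow_pos_of_pos hR0 _)
  have hhalf : R ^ ((1:ℝ)/2) = s ^ 2 := by
    rw [hs, ← Real.rpow_natCast (R ^ ((1:ℝ)/4)) 2, ← Real.rpow_mul hR0.le]; norm_num
  have hninv : R ^ (-(1:ℝ)/4) = s⁻¹ := by
    rw [hs, neg_div, Real.rpow_neg hR0.le]
  have hninv2 : R ^ (-(1:ℝ)/2) = (s ^ 2)⁻¹ := by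
    rw [neg_div, Real.rpow_neg hR0.le, hhalf]
  set w : Fin 3 → ℝ := ![R ^ (-(1:ℝ)/4) * z₀ 0 + 2 * z₀ 2 * R ^ (-(1:ℝ)/4) * ξ₀ 0,
        R ^ (-(1:ℝ)/4) * z₀ 1 + 2 * z₀ 2 * R ^ (-(1:ℝ)/4) * ξ₀ 1,
        R ^ (-(1:ℝ)/2) * z₀ 2] with hw
  set f : Fin 3 → MvPolynomial (Fin 3) ℝ :=
    ![C (R ^ ((1:ℝ)/4)) * X 0 - C (2 * R ^ ((1:ℝ)/2) * ξ₀ 0) * X 2,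
      C (R ^ ((1:ℝ)/4)) * X 1 - C (2 * R ^ ((1:ℝ)/2) * ξ₀ 1) * X 2,
      C (R ^ ((1:ℝ)/2)) * X 2] with hf
  have himg : (fun k => eval w (f k)) = z₀ := by
    funext k
    fin_cases k <;>
      · simp [hf, hw, hninv, hninv2, hhalf]
        field_simp
        simp only [hhalf]
        all_goals
          rw [hs]
          ring
  funext i
  show eval w (pderiv i (bind₁ f P)) = _
  rw [eval_pderiv_bind₁, himg]
  fin_cases i <;>
    · simp [Fin.sum_univ_three, hf, pderiv_mul, pderiv_X, pderiv_C, Pi.single_apply, hhalf,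
        grad3, hs]
      all_goals ring


set_option maxHeartbeats 800000 in
lemma aux_ineq (s L M E g0 g1 g2 b ξ0 ξ1 D : ℝ) (hs1 : 1 ≤ s) (hE : 0 < E)
    (hξsq : ξ0 ^ 2 + ξ1 ^ 2 ≤ 1) (hb : b = g2 - 2 * ξ0 * g0 - 2 * ξ1 * g1)
    (hL : L = Real.sqrt (g0 ^ 2 + g1 ^ 2 + g2 ^ 2))
    (hM : M = Real.sqrt ((s * g0) ^ 2 + (s * g1) ^ 2 + (s ^ 2 * b) ^ 2))
    (hne : ¬(g0 = 0 ∧ g1 = 0 ∧ g2 = 0))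
    (hD : |D| ≤ E * (s ^ 2)⁻¹ * L) :
    0 < M ∧ s ^ 2 * |D| ≤ 3 * E * s⁻¹ * M := by
  have hspos : 0 < s := lt_of_lt_of_le one_pos hs1
  have hs0 : s ≠ 0 := ne_of_gt hspos
  have hsumpos : 0 < g0 ^ 2 + g1 ^ 2 + g2 ^ 2 := by
    rcases lt_or_eq_of_le (by positivity : (0:ℝ) ≤ g0 ^ 2 + g1 ^ 2 + g2 ^ 2) with h | h
    · exact h
    · exfalso
      apply hne
      refine ⟨?_, ?_, ?_⟩ <;> nlinarith [sq_nonneg g0, sq_nonneg g1, sq_nonneg g2]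
  have hLpos : 0 < L := by rw [hL]; exact Real.sqrt_pos.mpr hsumpos
  have hu : (ξ0 * g0 + ξ1 * g1) ^ 2 ≤ g0 ^ 2 + g1 ^ 2 := by
    nlinarith [sq_nonneg (ξ0 * g1 - ξ1 * g0),
      mul_nonneg (sub_nonneg.mpr hξsq) (by positivity : (0:ℝ) ≤ g0 ^ 2 + g1 ^ 2)]
  have hs2 : 1 ≤ s ^ 2 := one_le_pow₀ hs1
  have hsqcmp : s ^ 2 * (g0 ^ 2 + g1 ^ 2 + g2 ^ 2) ≤
      9 * ((s * g0) ^ 2 + (s * g1) ^ 2 + (s ^ 2 * b) ^ 2) := by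
    have hstep : g0 ^ 2 + g1 ^ 2 + g2 ^ 2 ≤ 9 * (g0 ^ 2 + g1 ^ 2 + b ^ 2) := by
      rw [hb]
      nlinarith [hu, sq_nonneg (4 * g2 - 9 * (ξ0 * g0 + ξ1 * g1)),
        sq_nonneg (ξ0 * g0 + ξ1 * g1)]
    have h2 : s ^ 2 * b ^ 2 ≤ (s ^ 2 * b) ^ 2 := by
      have hpr := mul_nonneg (mul_nonneg (sq_nonneg s) (sq_nonneg b)) (sub_nonneg.mpr hs2)
      nlinarith [hpr]
    nlinarith [mul_le_mul_of_nonneg_left hstep (by positivity : (0:ℝ) ≤ s ^ 2), h2]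
  have hsLM : s * L ≤ 3 * M := by
    have h1 : s * L = Real.sqrt (s ^ 2 * (g0 ^ 2 + g1 ^ 2 + g2 ^ 2)) := by
      rw [hL, Real.sqrt_mul (by positivity), Real.sqrt_sq hspos.le]
    have h9 : Real.sqrt 9 = 3 := by
      rw [show (9:ℝ) = 3 ^ 2 by norm_num, Real.sqrt_sq (by norm_num : (0:ℝ) ≤ 3)]
    have h2 : 3 * M = Real.sqrt (9 * ((s * g0) ^ 2 + (s * g1) ^ 2 + (s ^ 2 * b) ^ 2)) := by
      rw [hM, Real.sqrt_mul (by norm_num : (0:ℝ) ≤ 9), h9]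
    rw [h1, h2]
    exact Real.sqrt_le_sqrt hsqcmp
  have hMpos : 0 < M := by nlinarith [mul_pos hspos hLpos]
  refine ⟨hMpos, ?_⟩
  have h1 : s ^ 2 * |D| ≤ s ^ 2 * (E * (s ^ 2)⁻¹ * L) :=
    mul_le_mul_of_nonneg_left hD (by positivity)
  have h2 : s ^ 2 * (E * (s ^ 2)⁻¹ * L) = E * L := by field_simp
  have h3 : E * L ≤ 3 * E * s⁻¹ * M := by
    have hLM : L ≤ 3 * s⁻¹ * M := by
      rw [← mul_le_mul_iff_right₀ hspos]
      calc s * L ≤ 3 * M := hsLM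
      _ = s * (3 * s⁻¹ * M) := by field_simp
    calc E * L ≤ E * (3 * s⁻¹ * M) := mul_le_mul_of_nonneg_left hLM hE.le
    _ = 3 * E * s⁻¹ * M := by ring
  linarith

set_option maxHeartbeats 800000 in
/-- **Tangency is preserved under parabolic rescaling.**
If the wave-packet direction `(-2ξ,1)` with `ξ = ξ₀ + R^{-1/4}ζ` makes (sine of) angle
`≤ E R^{-1/2}` with the tangent plane of `Z(P)` at a nonsingular point `z₀`, then after
parabolic rescaling the direction `(-2ζ,1)` makes angle `≤ C E R^{-1/4}` with the tangent
plane of `Z(Q)` at the image point `z̃₀`, for an absolute constant `C`. -/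
theorem stmt19 :
    ∃ C : ℝ, 0 < C ∧
      ∀ (R E : ℝ) (ξ₀ ζ : Fin 2 → ℝ) (P : MvPolynomial (Fin 3) ℝ) (z₀ : Fin 3 → ℝ),
        1 ≤ R → 0 < E → E * R ^ (-(1:ℝ)/2) ≤ 1/2 →
        Real.sqrt (∑ i, ξ₀ i ^ 2) ≤ 1 → Real.sqrt (∑ i, ζ i ^ 2) ≤ 1 →
        grad3 P z₀ ≠ 0 →
        |dot3 (dirV (fun i => ξ₀ i + R ^ (-(1:ℝ)/4) * ζ i)) (grad3 P z₀)| ≤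
          E * R ^ (-(1:ℝ)/2) * len3 (grad3 P z₀) →
        grad3 (rescaledPoly R ξ₀ P)
            ![R ^ (-(1:ℝ)/4) * z₀ 0 + 2 * z₀ 2 * R ^ (-(1:ℝ)/4) * ξ₀ 0,
              R ^ (-(1:ℝ)/4) * z₀ 1 + 2 * z₀ 2 * R ^ (-(1:ℝ)/4) * ξ₀ 1,
              R ^ (-(1:ℝ)/2) * z₀ 2] ≠ 0 ∧
        |dot3 (dirV ζ)
            (grad3 (rescaledPoly R ξ₀ P)
              ![R ^ (-(1:ℝ)/4) * z₀ 0 + 2 * z₀ 2 * R ^ (-(1:ℝ)/4) * ξ₀ 0,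
                R ^ (-(1:ℝ)/4) * z₀ 1 + 2 * z₀ 2 * R ^ (-(1:ℝ)/4) * ξ₀ 1,
                R ^ (-(1:ℝ)/2) * z₀ 2])| ≤
          C * E * R ^ (-(1:ℝ)/4) *
            len3 (grad3 (rescaledPoly R ξ₀ P)
              ![R ^ (-(1:ℝ)/4) * z₀ 0 + 2 * z₀ 2 * R ^ (-(1:ℝ)/4) * ξ₀ 0,
                R ^ (-(1:ℝ)/4) * z₀ 1 + 2 * z₀ 2 * R ^ (-(1:ℝ)/4) * ξ₀ 1,
                R ^ (-(1:ℝ)/2) * z₀ 2]) := by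
  refine ⟨3, by norm_num, ?_⟩
  intro R E ξ₀ ζ P z₀ hR hE _hER hξ _hζ hgne hdot
  have hR0 : (0:ℝ) < R := lt_of_lt_of_le one_pos hR
  have hkey := grad_rescaled_key R hR ξ₀ P z₀
  set s : ℝ := R ^ ((1:ℝ)/4) with hs
  have hs1 : 1 ≤ s := Real.one_le_rpow hR (by norm_num)
  have hspos : 0 < s := lt_of_lt_of_le one_pos hs1
  have hhalf : R ^ ((1:ℝ)/2) = s ^ 2 := by
    rw [hs, ← Real.rpow_natCast (R ^ ((1:ℝ)/4)) 2, ← Real.rpow_mul hR0.le]; norm_num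
  have hninv : R ^ (-(1:ℝ)/4) = s⁻¹ := by
    rw [hs, neg_div, Real.rpow_neg hR0.le]
  have hninv2 : R ^ (-(1:ℝ)/2) = (s ^ 2)⁻¹ := by
    rw [neg_div, Real.rpow_neg hR0.le, hhalf]
  set g0 : ℝ := grad3 P z₀ 0 with hg0
  set g1 : ℝ := grad3 P z₀ 1 with hg1
  set g2 : ℝ := grad3 P z₀ 2 with hg2
  set b : ℝ := g2 - 2 * ξ₀ 0 * g0 - 2 * ξ₀ 1 * g1 with hb
  set v : Fin 3 → ℝ := grad3 (rescaledPoly R ξ₀ P)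
      ![R ^ (-(1:ℝ)/4) * z₀ 0 + 2 * z₀ 2 * R ^ (-(1:ℝ)/4) * ξ₀ 0,
        R ^ (-(1:ℝ)/4) * z₀ 1 + 2 * z₀ 2 * R ^ (-(1:ℝ)/4) * ξ₀ 1,
        R ^ (-(1:ℝ)/2) * z₀ 2] with hv
  have hv0 : v 0 = s * g0 := by rw [hkey]; simp [hs]
  have hv1 : v 1 = s * g1 := by rw [hkey]; simp [hs]
  have hv2 : v 2 = s ^ 2 * b := by rw [hkey, hhalf]; simp
  have hξsum : (0:ℝ) ≤ ξ₀ 0 ^ 2 + ξ₀ 1 ^ 2 := by positivity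
  have hξsq : ξ₀ 0 ^ 2 + ξ₀ 1 ^ 2 ≤ 1 := by
    rw [Fin.sum_univ_two] at hξ
    nlinarith [Real.sq_sqrt hξsum, Real.sqrt_nonneg (ξ₀ 0 ^ 2 + ξ₀ 1 ^ 2)]
  have hLdef : len3 (grad3 P z₀) = Real.sqrt (g0 ^ 2 + g1 ^ 2 + g2 ^ 2) := by
    simp [len3, Fin.sum_univ_three, hg0, hg1, hg2]
  have hMdef : len3 v = Real.sqrt ((s * g0) ^ 2 + (s * g1) ^ 2 + (s ^ 2 * b) ^ 2) := by
    simp [len3, Fin.sum_univ_three, hv0, hv1, hv2]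
  have hdotid : dot3 (dirV ζ) v =
      s ^ 2 * dot3 (dirV (fun i => ξ₀ i + R ^ (-(1:ℝ)/4) * ζ i)) (grad3 P z₀) := by
    simp only [dot3, dirV, Fin.sum_univ_three, Matrix.cons_val_zero, Matrix.cons_val_one,
      Matrix.head_cons, Matrix.cons_val_two, Matrix.tail_cons, hv0, hv1, hv2, hninv, ← hg0, ← hg1, ← hg2, hb]
    field_simp
    ring
  have hdot' : |dot3 (dirV (fun i => ξ₀ i + R ^ (-(1:ℝ)/4) * ζ i)) (grad3 P z₀)| ≤
      E * (s ^ 2)⁻¹ * Real.sqrt (g0 ^ 2 + g1 ^ 2 + g2 ^ 2) := by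
    rw [hninv2, hLdef] at hdot
    exact hdot
  have hne : ¬(g0 = 0 ∧ g1 = 0 ∧ g2 = 0) := by
    rintro ⟨h0, h1, h2⟩
    apply hgne
    funext i
    fin_cases i
    · simpa using hg0.symm.trans h0
    · simpa using hg1.symm.trans h1
    · simpa using hg2.symm.trans h2
  obtain ⟨hMpos, hfin⟩ := aux_ineq s (Real.sqrt (g0 ^ 2 + g1 ^ 2 + g2 ^ 2))
    (Real.sqrt ((s * g0) ^ 2 + (s * g1) ^ 2 + (s ^ 2 * b) ^ 2)) E g0 g1 g2 b (ξ₀ 0) (ξ₀ 1)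
    (dot3 (dirV (fun i => ξ₀ i + R ^ (-(1:ℝ)/4) * ζ i)) (grad3 P z₀))
    hs1 hE hξsq hb rfl rfl hne hdot'
  constructor
  · intro h0
    have hM0 : len3 v = 0 := by rw [h0]; simp [len3]
    rw [hMdef] at hM0
    exact absurd hM0 (ne_of_gt hMpos)
  · rw [hdotid, hMdef, hninv, abs_mul, abs_of_nonneg (by positivity : (0:ℝ) ≤ s ^ 2)]
    rw [hninv] at hfin
    exact hfin
end
end
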